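/- Let u, w, a, b be vectors in a real inner product space with u ≠ 0, w ≠ 0, ‖a‖ = 1, ‖b‖ = 1, and suppose ‖u − a‖ ≤ η and ‖w − b‖ ≤ η for some real η ≥ 0. Then the cosine similarity of u and w differs from the inner product of a and b by at most 4η: |⟨u, w⟩/(‖u‖·‖w‖) − ⟨a, b⟩| ≤ 4η. -/
import Mathlib


open scoped RealInnerProductSpace

lemma normalize_close {E : Type*} [NormedAddCommGroup E] [InnerProductSpace ℝ E]
    (u a : E) (hu : u ≠ 0) (ha : ‖a‖ = 1) :
    ‖(‖u‖⁻¹ • u) - a‖ ≤ 2 * ‖u - a‖ := by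
  have hun : (0:ℝ) < ‖u‖ := norm_pos_iff.mpr hu
  have hdecomp : (‖u‖⁻¹ • u) - a = (u - a) + ((‖u‖⁻¹ - 1) • u) := by
    rw [sub_smul, one_smul]; abel
  rw [hdecomp]
  have h1 : ‖(‖u‖⁻¹ - 1) • u‖ = |1 - ‖u‖| := by
    rw [norm_smul, Real.norm_eq_abs]
    rw [show ‖u‖⁻¹ - 1 = (1 - ‖u‖) / ‖u‖ by field_simp]
    rw [abs_div, abs_of_pos hun, div_mul_cancel₀ _ hun.ne']
  have h2 : |1 - ‖u‖| ≤ ‖u - a‖ := by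
    calc |1 - ‖u‖| = |‖a‖ - ‖u‖| := by rw [ha]
    _ ≤ ‖a - u‖ := abs_norm_sub_norm_le a u
    _ = ‖u - a‖ := norm_sub_rev a u
  calc ‖(u - a) + ((‖u‖⁻¹ - 1) • u)‖ ≤ ‖u - a‖ + ‖(‖u‖⁻¹ - 1) • u‖ := norm_add_le _ _
  _ ≤ ‖u - a‖ + ‖u - a‖ := by rw [h1]; linarith
  _ = 2 * ‖u - a‖ := by ring

/-- Theorem 3 (quantitative): if nonzero vectors `u, w` are within distance `η` of
unit vectors `a, b` respectively, then the cosine similarity of `u` and `w` differs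
from `⟨a, b⟩` by at most `4η`. -/
theorem stmt_9 {E : Type*} [NormedAddCommGroup E] [InnerProductSpace ℝ E]
    (u w a b : E) (η : ℝ) (hη : 0 ≤ η) (hu : u ≠ 0) (hw : w ≠ 0)
    (ha : ‖a‖ = 1) (hb : ‖b‖ = 1) (hua : ‖u - a‖ ≤ η) (hwb : ‖w - b‖ ≤ η) :
    |⟪u, w⟫ / (‖u‖ * ‖w‖) - ⟪a, b⟫| ≤ 4 * η := by
  set u' := ‖u‖⁻¹ • u with hu'
  set w' := ‖w‖⁻¹ • w with hw'
  have hun : (0:ℝ) < ‖u‖ := norm_pos_iff.mpr hu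
  have hwn : (0:ℝ) < ‖w‖ := norm_pos_iff.mpr hw
  have hinner : ⟪u, w⟫ / (‖u‖ * ‖w‖) = ⟪u', w'⟫ := by
    rw [hu', hw', real_inner_smul_left, real_inner_smul_right]
    field_simp
  have hnw' : ‖w'‖ = 1 := norm_smul_inv_norm hw
  have hca : ‖u' - a‖ ≤ 2 * η := le_trans (normalize_close u a hu ha) (by linarith)
  have hcb : ‖w' - b‖ ≤ 2 * η := le_trans (normalize_close w b hw hb) (by linarith)
  have key : ⟪u', w'⟫ - ⟪a, b⟫ = ⟪u' - a, w'⟫ + ⟪a, w' - b⟫ := by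
    rw [inner_sub_left, inner_sub_right]; ring
  rw [hinner, key]
  calc |⟪u' - a, w'⟫ + ⟪a, w' - b⟫| ≤ |⟪u' - a, w'⟫| + |⟪a, w' - b⟫| := abs_add_le _ _
  _ ≤ ‖u' - a‖ * ‖w'‖ + ‖a‖ * ‖w' - b‖ := by
      gcongr <;> exact abs_real_inner_le_norm _ _
  _ ≤ 2 * η * 1 + 1 * (2 * η) := by rw [hnw', ha]; gcongr
  _ = 4 * η := by ring
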